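/- Let ν be a measure on (0,∞) with ∫_0^∞ min(y,1) ν(dy) < ∞ and ν((0,∞)) = ∞, and define ψ(s) = ∫_0^∞ (1 − e^{−sy}) ν(dy) for s > 0. Then the function R(s) := ψ(s) − s ψ'(s) satisfies R(s) = ∫_0^∞ (1 − e^{−sy} − sy e^{−sy}) ν(dy); R is continuous and strictly increasing on (0,∞), lim_{s→0+} R(s) = 0, and lim_{s→∞} R(s) = ν((0,∞)) = ∞. -/

import Mathlib

open MeasureTheory Filter Topology Set

/-- Let `ν` be a measure on `(0,∞)` with `∫ min(y,1) ν(dy) < ∞` and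
`ν((0,∞)) = ∞`, and let `ψ s = ∫ (1 - exp (-s y)) ν(dy)`.  Then
`R s := ψ s - s ψ' s = ∫ (1 - exp (-s y) - s y exp (-s y)) ν(dy)`; `R` is continuous and
strictly increasing on `(0,∞)`, `R s → 0` as `s → 0+`, and `R s → ν((0,∞)) = ∞` as
`s → ∞`. -/

lemma reu_mul_exp_neg_le_one (u : ℝ) : u * Real.exp (-u) ≤ 1 := by
  have h1 := Real.add_one_le_exp u
  have h3 : Real.exp (-u) * Real.exp u = 1 := by rw [← Real.exp_add]; simp
  nlinarith [Real.exp_pos u, Real.exp_pos (-u)]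

lemma reu_h_nonneg {u : ℝ} (hu : 0 ≤ u) : 0 ≤ 1 - Real.exp (-u) - u * Real.exp (-u) := by
  have h1 := Real.add_one_le_exp u
  have h3 : Real.exp (-u) * Real.exp u = 1 := by rw [← Real.exp_add]; simp
  nlinarith [Real.exp_pos u, Real.exp_pos (-u)]

lemma reu_h_le_one {u : ℝ} (hu : 0 ≤ u) : 1 - Real.exp (-u) - u * Real.exp (-u) ≤ 1 := by
  nlinarith [Real.exp_pos (-u), mul_nonneg hu (Real.exp_pos (-u)).le]

lemma reu_h_le {u : ℝ} (hu : 0 ≤ u) : 1 - Real.exp (-u) - u * Real.exp (-u) ≤ u := by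
  have := Real.add_one_le_exp (-u)
  nlinarith [mul_nonneg hu (Real.exp_pos (-u)).le]

lemma reu_h_le_min {u : ℝ} (hu : 0 ≤ u) :
    1 - Real.exp (-u) - u * Real.exp (-u) ≤ min u 1 := le_min (reu_h_le hu) (reu_h_le_one hu)

lemma reu_min_mul_le {c y : ℝ} (hc : 0 ≤ c) (hy : 0 < y) :
    min (c * y) 1 ≤ max c 1 * min y 1 := by
  rcases le_total y 1 with h | h
  · rw [min_eq_left h]
    calc min (c * y) 1 ≤ c * y := min_le_left _ _
      _ ≤ max c 1 * y := mul_le_mul_of_nonneg_right (le_max_left _ _) hy.le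
  · rw [min_eq_right h]
    calc min (c * y) 1 ≤ 1 := min_le_right _ _
      _ ≤ max c 1 * 1 := by simpa using le_max_right c 1

lemma reu_y_exp_le {t y : ℝ} (ht : 0 < t) (hy : 0 < y) :
    y * Real.exp (-(t * y)) ≤ max t⁻¹ 1 * min y 1 := by
  rcases le_total y 1 with h | h
  · have he : Real.exp (-(t * y)) ≤ 1 := Real.exp_le_one_iff.2 (by nlinarith)
    calc y * Real.exp (-(t * y)) ≤ y * 1 := mul_le_mul_of_nonneg_left he hy.le
      _ = min y 1 := by rw [mul_one, min_eq_left h]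
      _ ≤ max t⁻¹ 1 * min y 1 := by
          have : (0:ℝ) ≤ min y 1 := le_min hy.le zero_le_one
          nlinarith [le_max_right t⁻¹ 1]
  · have h2 : (t * y) * Real.exp (-(t * y)) ≤ 1 := reu_mul_exp_neg_le_one _
    have h3 : y * Real.exp (-(t * y)) ≤ t⁻¹ := by
      rw [← mul_le_mul_iff_right₀ ht, ← mul_assoc, mul_inv_cancel₀ ht.ne']
      nlinarith
    calc y * Real.exp (-(t * y)) ≤ t⁻¹ := h3
      _ ≤ max t⁻¹ 1 := le_max_left _ _
      _ = max t⁻¹ 1 * min y 1 := by rw [min_eq_right h, mul_one]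

lemma reu_h_hasDerivAt (u : ℝ) :
    HasDerivAt (fun u : ℝ => 1 - Real.exp (-u) - u * Real.exp (-u)) (u * Real.exp (-u)) u := by
  have he : HasDerivAt (fun u : ℝ => Real.exp (-u)) (Real.exp (-u) * (-1)) u :=
    (hasDerivAt_neg u).exp
  have h2 : HasDerivAt (fun u : ℝ => u * Real.exp (-u))
      (1 * Real.exp (-u) + u * (Real.exp (-u) * (-1))) u := (hasDerivAt_id u).mul he
  have := ((hasDerivAt_const u (1:ℝ)).sub he).sub h2
  exact this.congr_deriv (by ring)

lemma reu_h_strictMonoOn :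
    StrictMonoOn (fun u : ℝ => 1 - Real.exp (-u) - u * Real.exp (-u)) (Ici 0) := by
  apply strictMonoOn_of_deriv_pos (convex_Ici 0)
  · fun_prop
  · intro x hx
    rw [interior_Ici] at hx
    rw [(reu_h_hasDerivAt x).deriv]
    exact mul_pos hx (Real.exp_pos _)


theorem laplaceExponent_R_properties
    (ν : Measure ℝ) (ψ : ℝ → ℝ)
    (hν : ∫⁻ y in Set.Ioi (0 : ℝ), ENNReal.ofReal (min y 1) ∂ν < ⊤)
    (hνinf : ν (Set.Ioi (0 : ℝ)) = ⊤)
    (hψ : ∀ s : ℝ, ψ s = ∫ y in Set.Ioi (0 : ℝ), (1 - Real.exp (-(s * y))) ∂ν) :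
    (∀ s, 0 < s → ψ s - s * deriv ψ s
      = ∫ y in Set.Ioi (0 : ℝ),
          (1 - Real.exp (-(s * y)) - s * y * Real.exp (-(s * y))) ∂ν) ∧
    ContinuousOn (fun s => ψ s - s * deriv ψ s) (Set.Ioi 0) ∧
    StrictMonoOn (fun s => ψ s - s * deriv ψ s) (Set.Ioi 0) ∧
    Tendsto (fun s => ψ s - s * deriv ψ s) (𝓝[>] (0 : ℝ)) (𝓝 0) ∧
    Tendsto (fun s => ψ s - s * deriv ψ s) atTop atTop := by
  have hψeq : ψ = fun s => ∫ y in Set.Ioi (0:ℝ), (1 - Real.exp (-(s * y))) ∂ν := funext hψ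
  subst hψeq
  -- integrability of min y 1
  have hmin_int : Integrable (fun y => min y 1) (ν.restrict (Ioi 0)) := by
    refine ⟨(continuous_id.min continuous_const).aestronglyMeasurable, ?_⟩
    rw [hasFiniteIntegral_iff_ofReal ?_]
    · exact hν
    · exact ae_restrict_of_forall_mem measurableSet_Ioi fun y hy => le_min (le_of_lt hy) zero_le_one
  have hbd : ∀ (f : ℝ → ℝ) (C : ℝ), AEStronglyMeasurable f (ν.restrict (Ioi 0)) →
      (∀ y ∈ Ioi (0:ℝ), ‖f y‖ ≤ C * min y 1) → Integrable f (ν.restrict (Ioi 0)) := by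
    intro f C hm hb
    exact (hmin_int.const_mul C).mono' hm
      ((ae_restrict_iff' measurableSet_Ioi).2 (Eventually.of_forall hb))
  have hI1 : ∀ s : ℝ, 0 < s →
      Integrable (fun y => 1 - Real.exp (-(s * y))) (ν.restrict (Ioi 0)) := by
    intro s hs
    apply hbd _ (max s 1) (Continuous.aestronglyMeasurable (by fun_prop))
    intro y hy
    have hy0 : (0:ℝ) < y := hy
    have h0 : 0 ≤ 1 - Real.exp (-(s * y)) := by
      have : Real.exp (-(s * y)) ≤ 1 := Real.exp_le_one_iff.2 (by nlinarith)
      linarith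
    rw [Real.norm_eq_abs, abs_of_nonneg h0]
    calc 1 - Real.exp (-(s * y)) ≤ min (s * y) 1 := by
          apply le_min
          · linarith [Real.add_one_le_exp (-(s * y))]
          · linarith [(Real.exp_pos (-(s * y))).le]
      _ ≤ max s 1 * min y 1 := reu_min_mul_le hs.le hy0
  have hI2 : ∀ s : ℝ, 0 < s →
      Integrable (fun y => y * Real.exp (-(s * y))) (ν.restrict (Ioi 0)) := by
    intro s hs
    apply hbd _ (max s⁻¹ 1) (Continuous.aestronglyMeasurable (by fun_prop))
    intro y hy
    have hy0 : (0:ℝ) < y := hy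
    rw [Real.norm_eq_abs, abs_of_nonneg (mul_nonneg hy0.le (Real.exp_pos _).le)]
    exact reu_y_exp_le hs hy0
  -- derivative of ψ
  have hderiv : ∀ s : ℝ, 0 < s →
      HasDerivAt (fun s => ∫ y in Set.Ioi (0:ℝ), (1 - Real.exp (-(s * y))) ∂ν)
        (∫ y in Set.Ioi (0:ℝ), y * Real.exp (-(s * y)) ∂ν) s := by
    intro s hs
    have key := hasDerivAt_integral_of_dominated_loc_of_deriv_le (μ := ν.restrict (Ioi 0))
      (F := fun x y => 1 - Real.exp (-(x * y))) (F' := fun x y => y * Real.exp (-(x * y)))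
      (x₀ := s) (bound := fun y => max (s/2)⁻¹ 1 * min y 1) (Metric.ball_mem_nhds s (half_pos hs))
      (Eventually.of_forall fun x => Continuous.aestronglyMeasurable (by fun_prop))
      (hI1 s hs)
      (Continuous.aestronglyMeasurable (by fun_prop))
      ?_ (hmin_int.const_mul _) ?_
    · exact key.2
    · rw [ae_restrict_iff' measurableSet_Ioi]
      apply Eventually.of_forall
      intro y hy x hx
      have hy0 : (0:ℝ) < y := hy
      have hx2 : s/2 < x := by
        rw [Metric.mem_ball, Real.dist_eq] at hx
        have := abs_lt.1 hx
        linarith [this.1]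
      have hle : Real.exp (-(x * y)) ≤ Real.exp (-(s/2 * y)) := by
        apply Real.exp_le_exp.2
        nlinarith
      rw [Real.norm_eq_abs, abs_of_nonneg (mul_nonneg hy0.le (Real.exp_pos _).le)]
      calc y * Real.exp (-(x * y)) ≤ y * Real.exp (-(s/2 * y)) :=
            mul_le_mul_of_nonneg_left hle hy0.le
        _ ≤ max (s/2)⁻¹ 1 * min y 1 := reu_y_exp_le (half_pos hs) hy0
    · apply Eventually.of_forall
      intro y x _
      have h1 : HasDerivAt (fun x : ℝ => x * y) y x := hasDerivAt_mul_const y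
      have h2 := h1.neg.exp
      have h3 := (hasDerivAt_const x (1:ℝ)).sub h2
      exact h3.congr_deriv (by simp only [Pi.neg_apply]; ring)
  -- part 1 (the identity)
  have key : ∀ s : ℝ, 0 < s →
      (∫ y in Set.Ioi (0:ℝ), (1 - Real.exp (-(s * y))) ∂ν)
        - s * deriv (fun s => ∫ y in Set.Ioi (0:ℝ), (1 - Real.exp (-(s * y))) ∂ν) s
      = ∫ y in Set.Ioi (0:ℝ),
          (1 - Real.exp (-(s * y)) - s * y * Real.exp (-(s * y))) ∂ν := by
    intro s hs
    rw [(hderiv s hs).deriv, ← integral_const_mul,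
      ← integral_sub (hI1 s hs) ((hI2 s hs).const_mul s)]
    congr 1
    funext y
    ring
  -- integrability of the R-integrand
  have hIh : ∀ s : ℝ, 0 < s → Integrable
      (fun y => 1 - Real.exp (-(s * y)) - s * y * Real.exp (-(s * y)))
      (ν.restrict (Ioi 0)) := by
    intro s hs
    refine ((hI1 s hs).sub ((hI2 s hs).const_mul s)).congr (Eventually.of_forall fun y => ?_)
    simp only [Pi.sub_apply]
    ring
  have hpos : ∀ s : ℝ, 0 ≤ s →
      (0:ℝ→ℝ) ≤ᵐ[ν.restrict (Ioi 0)]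
        fun y => 1 - Real.exp (-(s * y)) - s * y * Real.exp (-(s * y)) := by
    intro s hs
    exact ae_restrict_of_forall_mem measurableSet_Ioi
      fun y hy => reu_h_nonneg (mul_nonneg hs (le_of_lt hy))
  -- continuity
  have hcont : ContinuousOn (fun s => ∫ y in Set.Ioi (0:ℝ),
      (1 - Real.exp (-(s * y)) - s * y * Real.exp (-(s * y))) ∂ν) (Ioi 0) := by
    intro s₀ hs₀
    have hs₀' : (0:ℝ) < s₀ := hs₀
    apply ContinuousAt.continuousWithinAt
    apply continuousAt_of_dominated (bound := fun y => max (2 * s₀) 1 * min y 1)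
    · exact Eventually.of_forall fun x => Continuous.aestronglyMeasurable (by fun_prop)
    · filter_upwards [Ioo_mem_nhds hs₀' (by linarith : s₀ < 2 * s₀)] with x hx
      rw [ae_restrict_iff' measurableSet_Ioi]
      apply Eventually.of_forall
      intro y hy
      have hy0 : (0:ℝ) < y := hy
      have hxy : 0 ≤ x * y := mul_nonneg hx.1.le hy0.le
      rw [Real.norm_eq_abs, abs_of_nonneg (reu_h_nonneg hxy)]
      calc 1 - Real.exp (-(x * y)) - x * y * Real.exp (-(x * y)) ≤ min (x * y) 1 :=
            reu_h_le_min hxy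
        _ ≤ max x 1 * min y 1 := reu_min_mul_le hx.1.le hy0
        _ ≤ max (2 * s₀) 1 * min y 1 := by
            have h1 : max x 1 ≤ max (2 * s₀) 1 := max_le_max hx.2.le le_rfl
            have h2 : (0:ℝ) ≤ min y 1 := le_min hy0.le zero_le_one
            exact mul_le_mul_of_nonneg_right h1 h2
    · exact hmin_int.const_mul _
    · exact Eventually.of_forall fun y => Continuous.continuousAt (by fun_prop)
  -- strict monotonicity
  have hmono : StrictMonoOn (fun s => ∫ y in Set.Ioi (0:ℝ),
      (1 - Real.exp (-(s * y)) - s * y * Real.exp (-(s * y))) ∂ν) (Ioi 0) := by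
    intro a ha b hb hab
    have ha' : (0:ℝ) < a := ha
    have hb' : (0:ℝ) < b := hb
    have hfa := hIh a ha'
    have hfb := hIh b hb'
    have hlt : ∀ y ∈ Ioi (0:ℝ),
        (1 - Real.exp (-(a * y)) - a * y * Real.exp (-(a * y)))
        < (1 - Real.exp (-(b * y)) - b * y * Real.exp (-(b * y))) := by
      intro y hy
      have hy0 : (0:ℝ) < y := hy
      exact reu_h_strictMonoOn (mul_nonneg ha'.le hy0.le) (mul_nonneg hb'.le hy0.le)
        (by nlinarith)
    have hsub : 0 < ∫ y in Set.Ioi (0:ℝ),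
        ((1 - Real.exp (-(b * y)) - b * y * Real.exp (-(b * y)))
          - (1 - Real.exp (-(a * y)) - a * y * Real.exp (-(a * y)))) ∂ν := by
      have hfsub : Integrable (fun y =>
          (1 - Real.exp (-(b * y)) - b * y * Real.exp (-(b * y)))
            - (1 - Real.exp (-(a * y)) - a * y * Real.exp (-(a * y)))) (ν.restrict (Ioi 0)) :=
        (hfb.sub hfa).congr (Eventually.of_forall fun y => by simp [Pi.sub_apply])
      rw [setIntegral_pos_iff_support_of_nonneg_ae ?_ hfsub]
      · have hsup : Ioi (0:ℝ) ⊆ Function.support (fun y =>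
            (1 - Real.exp (-(b * y)) - b * y * Real.exp (-(b * y)))
              - (1 - Real.exp (-(a * y)) - a * y * Real.exp (-(a * y)))) := by
          intro y hy
          exact sub_ne_zero.2 (hlt y hy).ne'
        rw [inter_eq_right.2 hsup, hνinf]
        exact ENNReal.zero_lt_top
      · exact ae_restrict_of_forall_mem measurableSet_Ioi
          fun y hy => sub_nonneg.2 (hlt y hy).le
    rw [integral_sub hfb hfa] at hsub
    simp only
    linarith
  -- limit at 0+
  have h0 : Tendsto (fun s => ∫ y in Set.Ioi (0:ℝ),
      (1 - Real.exp (-(s * y)) - s * y * Real.exp (-(s * y))) ∂ν) (𝓝[>] (0:ℝ)) (𝓝 0) := by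
    have h := tendsto_integral_filter_of_dominated_convergence (μ := ν.restrict (Ioi 0))
      (l := 𝓝[>] (0:ℝ))
      (F := fun s y => 1 - Real.exp (-(s * y)) - s * y * Real.exp (-(s * y)))
      (f := fun _ => (0:ℝ)) (fun y => min y 1)
      (Eventually.of_forall fun x => Continuous.aestronglyMeasurable (by fun_prop))
      ?_ hmin_int ?_
    · simpa using h
    · filter_upwards [Ioc_mem_nhdsGT_of_mem (by norm_num : (0:ℝ) ∈ Ico (0:ℝ) 1)] with s hs
      rw [ae_restrict_iff' measurableSet_Ioi]
      apply Eventually.of_forall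
      intro y hy
      have hy0 : (0:ℝ) < y := hy
      have hsy : 0 ≤ s * y := mul_nonneg hs.1.le hy0.le
      rw [Real.norm_eq_abs, abs_of_nonneg (reu_h_nonneg hsy)]
      apply le_min
      · calc 1 - Real.exp (-(s * y)) - s * y * Real.exp (-(s * y)) ≤ s * y := reu_h_le hsy
          _ ≤ 1 * y := by nlinarith [hs.2]
          _ = y := one_mul y
      · exact reu_h_le_one hsy
    · apply Eventually.of_forall
      intro y
      have ce : Continuous fun s : ℝ => Real.exp (-(s * y)) :=
        Real.continuous_exp.comp (continuous_id.mul continuous_const).neg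
      have hc : Continuous fun s : ℝ => 1 - Real.exp (-(s * y)) - s * y * Real.exp (-(s * y)) :=
        (continuous_const.sub ce).sub ((continuous_id.mul continuous_const).mul ce)
      have h1 : Tendsto (fun s : ℝ => 1 - Real.exp (-(s * y)) - s * y * Real.exp (-(s * y)))
          (𝓝[>] (0:ℝ)) (𝓝 (1 - Real.exp (-(0 * y)) - 0 * y * Real.exp (-(0 * y)))) :=
        (hc.tendsto 0).mono_left nhdsWithin_le_nhds
      simpa using h1
  -- limit at ∞
  have htop : Tendsto (fun s => ∫ y in Set.Ioi (0:ℝ),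
      (1 - Real.exp (-(s * y)) - s * y * Real.exp (-(s * y))) ∂ν) atTop atTop := by
    rw [tendsto_atTop]
    intro M
    have hfin : ∀ ε : ℝ, 0 < ε → ν (Ioi ε) < ⊤ := by
      intro ε hε
      by_contra hcon
      have htop' : ν (Ioi ε) = ⊤ := eq_top_iff.2 (not_lt.1 hcon)
      have h1 : ∫⁻ y in Ioi ε, ENNReal.ofReal (min ε 1) ∂ν
          ≤ ∫⁻ y in Ioi (0:ℝ), ENNReal.ofReal (min y 1) ∂ν := by
        refine le_trans (setLIntegral_mono (by fun_prop) ?_)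
          (lintegral_mono_set (Ioi_subset_Ioi hε.le))
        intro y hy
        exact ENNReal.ofReal_le_ofReal (min_le_min (le_of_lt hy) le_rfl)
      rw [setLIntegral_const, htop', ENNReal.mul_top
        (ENNReal.ofReal_pos.2 (lt_min hε one_pos)).ne'] at h1
      exact hν.ne (top_le_iff.1 h1)
    have hsup : ∃ ε : ℝ, 0 < ε ∧ ENNReal.ofReal (2 * |M| + 1) < ν (Ioi ε) := by
      have hU : ⋃ n : ℕ, Ioi ((1:ℝ)/(n+1)) = Ioi (0:ℝ) := by
        ext y
        simp only [mem_iUnion, mem_Ioi]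
        constructor
        · rintro ⟨n, hn⟩; exact lt_trans (by positivity) hn
        · intro hy; exact exists_nat_one_div_lt hy
      have hdir : Directed (· ⊆ ·) (fun n : ℕ => Ioi ((1:ℝ)/(n+1))) := by
        apply Monotone.directed_le
        intro m n hmn
        apply Ioi_subset_Ioi
        apply one_div_le_one_div_of_le (by positivity)
        have : (m:ℝ) ≤ (n:ℝ) := by exact_mod_cast hmn
        linarith
      have hiu := Directed.measure_iUnion (μ := ν) hdir
      rw [hU, hνinf] at hiu
      have hlt : ENNReal.ofReal (2 * |M| + 1) < ⨆ n : ℕ, ν (Ioi ((1:ℝ)/(n+1))) := by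
        rw [← hiu]; exact ENNReal.ofReal_lt_top
      obtain ⟨n, hn⟩ := lt_iSup_iff.1 hlt
      exact ⟨1/(n+1), by positivity, hn⟩
    obtain ⟨ε, hε, hνε⟩ := hsup
    have hfinε := hfin ε hε
    have htr : 2 * |M| + 1 ≤ (ν (Ioi ε)).toReal := by
      have h := ENNReal.toReal_mono hfinε.ne hνε.le
      rwa [ENNReal.toReal_ofReal (by positivity)] at h
    have hlim1 : Tendsto (fun u : ℝ => 1 - Real.exp (-u) - u * Real.exp (-u)) atTop (𝓝 1) := by
      have h1 : Tendsto (fun u : ℝ => Real.exp (-u)) atTop (𝓝 0) :=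
        Real.tendsto_exp_neg_atTop_nhds_zero
      have h2 : Tendsto (fun u : ℝ => u * Real.exp (-u)) atTop (𝓝 0) := by
        have := Real.tendsto_pow_mul_exp_neg_atTop_nhds_zero 1
        simpa using this
      have := ((tendsto_const_nhds (x := (1:ℝ)) (f := atTop)).sub h1).sub h2
      simpa using this
    have hev : ∀ᶠ u : ℝ in atTop, (1:ℝ)/2 ≤ 1 - Real.exp (-u) - u * Real.exp (-u) :=
      hlim1.eventually (eventually_ge_nhds (by norm_num))
    obtain ⟨u₀, hu₀⟩ := eventually_atTop.1 hev
    filter_upwards [eventually_ge_atTop (max (u₀/ε) 1)] with s hs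
    have hs1 : (1:ℝ) ≤ s := le_trans (le_max_right _ _) hs
    have hs0 : (0:ℝ) < s := lt_of_lt_of_le one_pos hs1
    have hsε : u₀ ≤ s * ε := by
      have h := le_trans (le_max_left _ _) hs
      rw [div_le_iff₀ hε] at h
      linarith
    have hIOn : IntegrableOn (fun y => 1 - Real.exp (-(s * y)) - s * y * Real.exp (-(s * y)))
        (Ioi ε) ν := IntegrableOn.mono_set (hIh s hs0) (Ioi_subset_Ioi hε.le)
    have hconst : IntegrableOn (fun _ : ℝ => (1:ℝ)/2) (Ioi ε) ν :=
      integrableOn_const hfinε.ne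
    have c1 : ∫ y in Ioi ε, (1/2 : ℝ) ∂ν ≤ ∫ y in Ioi ε,
        (1 - Real.exp (-(s * y)) - s * y * Real.exp (-(s * y))) ∂ν := by
      apply setIntegral_mono_on hconst hIOn measurableSet_Ioi
      intro y hy
      have hy' : ε < y := hy
      have : u₀ ≤ s * y := le_trans hsε (by nlinarith)
      exact hu₀ (s * y) this
    have c2 : ∫ y in Ioi ε,
        (1 - Real.exp (-(s * y)) - s * y * Real.exp (-(s * y))) ∂ν
        ≤ ∫ y in Ioi (0:ℝ),
        (1 - Real.exp (-(s * y)) - s * y * Real.exp (-(s * y))) ∂ν :=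
      setIntegral_mono_set (hIh s hs0) (hpos s hs0.le)
        ((Ioi_subset_Ioi hε.le).eventuallyLE)
    rw [setIntegral_const, smul_eq_mul, measureReal_def] at c1
    have habs : |M| ≤ (ν (Ioi ε)).toReal * (1/2) := by linarith
    linarith [le_abs_self M]
  refine ⟨key, hcont.congr fun s hs => key s hs, ?_, ?_, ?_⟩
  · intro a ha b hb hab
    have := hmono ha hb hab
    simp only at this ⊢
    rw [key a ha, key b hb]
    exact this
  · apply Tendsto.congr' _ h0
    filter_upwards [self_mem_nhdsWithin] with s hs
    exact (key s hs).symm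
  · apply Tendsto.congr' _ htop
    filter_upwards [eventually_gt_atTop (0:ℝ)] with s hs
    exact (key s hs).symm
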